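/- In the bit-gadget graph, dist(a^i, b^j) ≥ 3 for all i, j ∈ {0,…,k−1}; moreover, if k ≥ 4, then dist(a^i, b^i) = 5 for every i ∈ {0,…,k−1}. -/

import Mathlib

/-- Vertices of the bit-gadget graph: `a i`, `b i` for `i < k`, and the
bit-nodes `fA h`, `tA h`, `fB h`, `tB h` for `h < logk`. -/
inductive BGVertex (k logk : ℕ) where
  | a (i : Fin k)
  | b (i : Fin k)
  | fA (h : Fin logk)
  | tA (h : Fin logk)
  | fB (h : Fin logk)
  | tB (h : Fin logk)
deriving DecidableEq

/-- Base relation generating the edges of the bit-gadget graph: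
`a i` is adjacent to `fA h` iff the `h`-th bit of `i` is `0`, to `tA h` iff it is `1`
(so `a i` is adjacent exactly to `bin(a i)`); similarly for `b i`; and the cross
edges `(fA h, tB h)` and `(tA h, fB h)`. -/
def bgRel (k logk : ℕ) : BGVertex k logk → BGVertex k logk → Prop
  | .a i, .fA h => i.val.testBit h.val = false
  | .a i, .tA h => i.val.testBit h.val = true
  | .b i, .fB h => i.val.testBit h.val = false
  | .b i, .tB h => i.val.testBit h.val = true
  | .fA h, .tB h' => h = h'
  | .tA h, .fB h' => h = h'
  | _, _ => False

/-- The bit-gadget graph. -/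
def bgGraph (k logk : ℕ) : SimpleGraph (BGVertex k logk) :=
  SimpleGraph.fromRel (bgRel k logk)

/-- Level function on the bit-gadget graph. -/
def bgLvl {k logk : ℕ} : BGVertex k logk → ℤ
  | .a _ => 0
  | .fA _ => 1
  | .tA _ => 1
  | .fB _ => 2
  | .tB _ => 2
  | .b _ => 3

lemma bgLvl_adj {k logk : ℕ} {u v : BGVertex k logk} (h : (bgGraph k logk).Adj u v) :
    bgLvl v = bgLvl u + 1 ∨ bgLvl v = bgLvl u - 1 := by
  rw [bgGraph, SimpleGraph.fromRel_adj] at h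
  obtain ⟨-, h | h⟩ := h <;> cases u <;> cases v <;> simp_all [bgRel, bgLvl]

lemma bgWalk_length {k logk : ℕ} {u v : BGVertex k logk} (p : (bgGraph k logk).Walk u v) :
    ∃ m : ℕ, (p.length : ℤ) = bgLvl v - bgLvl u + 2 * m := by
  induction p with
  | nil => exact ⟨0, by simp⟩
  | cons h q ih =>
    obtain ⟨m, hm⟩ := ih
    rcases bgLvl_adj h with h1 | h1
    · refine ⟨m, ?_⟩
      rw [SimpleGraph.Walk.length_cons]
      push_cast
      omega
    · refine ⟨m + 1, ?_⟩
      rw [SimpleGraph.Walk.length_cons]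
      push_cast
      omega

lemma bg_no_walk3 {k logk : ℕ} (i : Fin k)
    (p : (bgGraph k logk).Walk (BGVertex.a i) (BGVertex.b i)) : p.length ≠ 3 := by
  intro hlen
  have h1 := p.adj_getVert_succ (i := 0) (by omega)
  have h2 := p.adj_getVert_succ (i := 1) (by omega)
  have h3 := p.adj_getVert_succ (i := 2) (by omega)
  have h0 : p.getVert 0 = BGVertex.a i := p.getVert_zero
  have h4 : p.getVert 3 = BGVertex.b i := by
    have := p.getVert_length
    rwa [hlen] at this
  rw [h0] at h1
  rw [h4] at h3
  set x := p.getVert 1 with hx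
  set y := p.getVert 2 with hy
  simp only [bgGraph, SimpleGraph.fromRel_adj] at h1 h2 h3
  obtain ⟨-, h1⟩ := h1
  obtain ⟨-, h2⟩ := h2
  obtain ⟨-, h3⟩ := h3
  clear_value x y
  cases x <;> cases y <;> simp_all [bgRel]

/-- in the bit-gadget graph (for `k = 2 ^ logk`, `k ≥ 2`),
`dist(a i, b j) ≥ 3` for all `i, j`; moreover if `k ≥ 4` then `dist(a i, b i) = 5`
for every `i`.  Distances are taken in `ℕ∞` (`∞` when there is no path). -/
theorem bitGadget_dist_a_b_ge_three_and_eq_five (k logk : ℕ) (hk : 2 ≤ k)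
    (hpow : k = 2 ^ logk) :
    (∀ i j : Fin k, 3 ≤ (bgGraph k logk).edist (BGVertex.a i) (BGVertex.b j)) ∧
    (4 ≤ k → ∀ i : Fin k,
      (bgGraph k logk).edist (BGVertex.a i) (BGVertex.b i) = 5) := by
  constructor
  · intro i j
    by_cases hr : (bgGraph k logk).Reachable (BGVertex.a i) (BGVertex.b j)
    · obtain ⟨p, hp⟩ := hr.exists_walk_length_eq_edist
      obtain ⟨m, hm⟩ := bgWalk_length p
      simp only [bgLvl] at hm
      have h3 : 3 ≤ p.length := by omega
      rw [← hp]
      exact_mod_cast Nat.cast_le.mpr h3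
    · rw [SimpleGraph.edist_eq_top_of_not_reachable hr]
      exact le_top
  · intro h4 i
    have hl2 : 2 ≤ logk := by
      by_contra h
      interval_cases logk <;> omega
    have hj : i.val ^^^ 1 < k := by
      have h1 : (1:ℕ) < 2 ^ logk := lt_of_lt_of_le (by norm_num) (hpow ▸ h4)
      have hi : i.val < 2 ^ logk := by omega
      have := Nat.xor_lt_two_pow hi h1
      omega
    set j : Fin k := ⟨i.val ^^^ 1, hj⟩ with hjdef
    have h0' : Fin logk := ⟨0, by omega⟩
    have hW : ∃ w : (bgGraph k logk).Walk (BGVertex.a i) (BGVertex.b i), w.length = 5 := by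
      have t10 : Nat.testBit 1 0 = true := by decide
      have t11 : Nat.testBit 1 1 = false := by decide
      have hjb0 : j.val.testBit 0 = !(i.val.testBit 0) := by
        simp [hjdef, Nat.testBit_xor, t10]
        rcases Nat.mod_two_eq_zero_or_one i.val with h | h <;> simp [Nat.add_mod, h]
      have hjb1 : j.val.testBit 1 = i.val.testBit 1 := by
        simp [hjdef, Nat.testBit_xor, t11]
      cases hb0 : i.val.testBit 0 <;> cases hb1 : i.val.testBit 1
      · -- bits 0 and 1 both false
        have e1 : (bgGraph k logk).Adj (.a i) (.fA ⟨0, by omega⟩) := by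
          simp [bgGraph, SimpleGraph.fromRel_adj, bgRel, hb0]
        have e2 : (bgGraph k logk).Adj (.fA ⟨0, by omega⟩) (.tB ⟨0, by omega⟩) := by
          simp [bgGraph, SimpleGraph.fromRel_adj, bgRel]
        have e3 : (bgGraph k logk).Adj (.tB ⟨0, by omega⟩) (.b j) := by
          simp [bgGraph, SimpleGraph.fromRel_adj, bgRel, hjb0, hb0]
        have e4 : (bgGraph k logk).Adj (.b j) (.fB ⟨1, by omega⟩) := by
          simp [bgGraph, SimpleGraph.fromRel_adj, bgRel, hjb1, hb1]
        have e5 : (bgGraph k logk).Adj (.fB ⟨1, by omega⟩) (.b i) := by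
          simp [bgGraph, SimpleGraph.fromRel_adj, bgRel, hb1]
        exact ⟨.cons e1 (.cons e2 (.cons e3 (.cons e4 (.cons e5 .nil)))), rfl⟩
      · -- bit 0 false, bit 1 true
        have e1 : (bgGraph k logk).Adj (.a i) (.fA ⟨0, by omega⟩) := by
          simp [bgGraph, SimpleGraph.fromRel_adj, bgRel, hb0]
        have e2 : (bgGraph k logk).Adj (.fA ⟨0, by omega⟩) (.tB ⟨0, by omega⟩) := by
          simp [bgGraph, SimpleGraph.fromRel_adj, bgRel]
        have e3 : (bgGraph k logk).Adj (.tB ⟨0, by omega⟩) (.b j) := by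
          simp [bgGraph, SimpleGraph.fromRel_adj, bgRel, hjb0, hb0]
        have e4 : (bgGraph k logk).Adj (.b j) (.tB ⟨1, by omega⟩) := by
          simp [bgGraph, SimpleGraph.fromRel_adj, bgRel, hjb1, hb1]
        have e5 : (bgGraph k logk).Adj (.tB ⟨1, by omega⟩) (.b i) := by
          simp [bgGraph, SimpleGraph.fromRel_adj, bgRel, hb1]
        exact ⟨.cons e1 (.cons e2 (.cons e3 (.cons e4 (.cons e5 .nil)))), rfl⟩
      · -- bit 0 true, bit 1 false
        have e1 : (bgGraph k logk).Adj (.a i) (.tA ⟨0, by omega⟩) := by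
          simp [bgGraph, SimpleGraph.fromRel_adj, bgRel, hb0]
        have e2 : (bgGraph k logk).Adj (.tA ⟨0, by omega⟩) (.fB ⟨0, by omega⟩) := by
          simp [bgGraph, SimpleGraph.fromRel_adj, bgRel]
        have e3 : (bgGraph k logk).Adj (.fB ⟨0, by omega⟩) (.b j) := by
          simp [bgGraph, SimpleGraph.fromRel_adj, bgRel, hjb0, hb0]
        have e4 : (bgGraph k logk).Adj (.b j) (.fB ⟨1, by omega⟩) := by
          simp [bgGraph, SimpleGraph.fromRel_adj, bgRel, hjb1, hb1]
        have e5 : (bgGraph k logk).Adj (.fB ⟨1, by omega⟩) (.b i) := by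
          simp [bgGraph, SimpleGraph.fromRel_adj, bgRel, hb1]
        exact ⟨.cons e1 (.cons e2 (.cons e3 (.cons e4 (.cons e5 .nil)))), rfl⟩
      · -- bits 0 and 1 both true
        have e1 : (bgGraph k logk).Adj (.a i) (.tA ⟨0, by omega⟩) := by
          simp [bgGraph, SimpleGraph.fromRel_adj, bgRel, hb0]
        have e2 : (bgGraph k logk).Adj (.tA ⟨0, by omega⟩) (.fB ⟨0, by omega⟩) := by
          simp [bgGraph, SimpleGraph.fromRel_adj, bgRel]
        have e3 : (bgGraph k logk).Adj (.fB ⟨0, by omega⟩) (.b j) := by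
          simp [bgGraph, SimpleGraph.fromRel_adj, bgRel, hjb0, hb0]
        have e4 : (bgGraph k logk).Adj (.b j) (.tB ⟨1, by omega⟩) := by
          simp [bgGraph, SimpleGraph.fromRel_adj, bgRel, hjb1, hb1]
        have e5 : (bgGraph k logk).Adj (.tB ⟨1, by omega⟩) (.b i) := by
          simp [bgGraph, SimpleGraph.fromRel_adj, bgRel, hb1]
        exact ⟨.cons e1 (.cons e2 (.cons e3 (.cons e4 (.cons e5 .nil)))), rfl⟩
    obtain ⟨w, hw5⟩ := hW
    have hub : (bgGraph k logk).edist (BGVertex.a i) (BGVertex.b i) ≤ 5 := by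
      have := SimpleGraph.edist_le w
      rw [hw5] at this
      exact_mod_cast this
    have hr : (bgGraph k logk).Reachable (BGVertex.a i) (BGVertex.b i) := ⟨w⟩
    obtain ⟨p, hp⟩ := hr.exists_walk_length_eq_edist
    obtain ⟨m, hm⟩ := bgWalk_length p
    simp only [bgLvl] at hm
    have hne3 := bg_no_walk3 i p
    have h5 : 5 ≤ p.length := by omega
    have hlb : 5 ≤ (bgGraph k logk).edist (BGVertex.a i) (BGVertex.b i) := by
      rw [← hp]
      exact_mod_cast Nat.cast_le.mpr h5
    exact le_antisymm hub hlb
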